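/- Iterative (Dyson) expansion with remainder estimate: let H_I(t) be a family of linear operators from a normed space (𝔽, ‖·‖) into normed spaces 𝐅_{𝔅ₙ} such that ‖H_I(t)‖ ≤ 1 as a map 𝔽 → 𝐅_{𝔅₀} and H_I(t) maps 𝔅_{n−1}-bounded sets into 𝔅ₙ-bounded sets uniformly in t. Suppose S_g(t)Φ solves S_g'(t)Φ = −i g H_I(t) S_g(t)Φ with S_g(τ) = 1 and ‖S_g(t)Φ‖_𝔽 = ‖Φ‖_𝔽. Define S_[0] = 1 and S_[n](t) = −i ∫_τ^t H_I(u) S_[n−1](u) du. Then for every n, ‖(S_g(t) − Σ_{k=0}^n g^k S_[k](t))Φ‖_{𝔅ₙ} ≤ g^{n+1} ((t−τ)^{n+1}/(n+1)!) ‖Φ‖_𝔽. -/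

import Mathlib

open MeasureTheory intervalIntegral

private lemma seminorm_intervalIntegral_le {E : Type*} [NormedAddCommGroup E]
    [NormedSpace ℂ E] [CompleteSpace E]
    (p : Seminorm ℂ E) (hp : Continuous fun x => p x) {f : ℝ → E} (hf : Continuous f)
    {a b : ℝ} (hab : a ≤ b) :
    p (∫ u in a..b, f u) ≤ ∫ u in a..b, p (f u) := by
  rcases eq_or_lt_of_le hab with rfl|h
  · simp
  set μ := volume.restrict (Set.Ioc a b) with hμ
  have hμuniv : μ Set.univ = ENNReal.ofReal (b - a) := by
    simp [hμ, Real.volume_Ioc]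
  haveI : IsFiniteMeasure μ := ⟨by rw [hμuniv]; exact ENNReal.ofReal_lt_top⟩
  haveI : NeZero μ := ⟨by
    intro h0
    rw [h0] at hμuniv
    simp only [Measure.coe_zero, Pi.zero_apply] at hμuniv
    have := ENNReal.ofReal_pos.2 (sub_pos.2 h)
    rw [← hμuniv] at this; exact lt_irrefl _ this⟩
  have hfi : Integrable f μ := hf.integrableOn_Ioc
  have hgi : Integrable ((fun x => p x) ∘ f) μ := (hp.comp hf).integrableOn_Ioc
  have key := p.convexOn.map_average_le hp.continuousOn isClosed_univ
    (Filter.Eventually.of_forall fun _ => Set.mem_univ _) hfi hgi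
  have hmass : (μ Set.univ).toReal = b - a := by
    rw [hμuniv, ENNReal.toReal_ofReal (by linarith)]
  have havg : (∫ x, f x ∂μ) = (b - a) • ⨍ x, f x ∂μ := by
    rw [average_eq, smul_smul, (show μ.real Set.univ = b - a from hmass), mul_inv_cancel₀ (by linarith), one_smul]
  have havg2 : (∫ x, p (f x) ∂μ) = (b - a) * ⨍ x, p (f x) ∂μ := by
    rw [average_eq, (show μ.real Set.univ = b - a from hmass), smul_eq_mul, ← mul_assoc, mul_inv_cancel₀ (by linarith), one_mul]
  rw [intervalIntegral.integral_of_le hab, intervalIntegral.integral_of_le hab]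
  calc p (∫ x, f x ∂μ) = (b - a) * p (⨍ x, f x ∂μ) := by
        rw [havg, ← Complex.coe_smul, map_smul_eq_mul, Complex.norm_real,
          Real.norm_eq_abs, abs_of_nonneg (by linarith)]
    _ ≤ (b - a) * ⨍ x, p (f x) ∂μ :=
        mul_le_mul_of_nonneg_left key (by linarith)
    _ = ∫ x, p (f x) ∂μ := havg2.symm

private lemma aux_est {E : Type*} [NormedAddCommGroup E]
    [NormedSpace ℂ E] [CompleteSpace E]
    (p : Seminorm ℂ E) (hp : Continuous fun x => p x) {g τ t : ℝ} (hg : 0 ≤ g)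
    (hτt : τ ≤ t) {f : ℝ → E} (hf : Continuous f) {B : ℝ → ℝ} (hB : Continuous B)
    (hbd : ∀ u ∈ Set.Icc τ t, p (f u) ≤ B u) :
    p (∫ u in τ..t, -((g : ℂ) • (Complex.I • f u))) ≤ g * ∫ u in τ..t, B u := by
  have hfc : Continuous fun u => -((g : ℂ) • (Complex.I • f u)) :=
    ((hf.const_smul _).const_smul _).neg
  have hpt : ∀ u, p (-((g : ℂ) • (Complex.I • f u))) = g * p (f u) := by
    intro u
    rw [map_neg_eq_map, map_smul_eq_mul, map_smul_eq_mul, Complex.norm_I, one_mul,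
      Complex.norm_real, Real.norm_eq_abs, abs_of_nonneg hg]
  calc p (∫ u in τ..t, -((g : ℂ) • (Complex.I • f u)))
      ≤ ∫ u in τ..t, p (-((g : ℂ) • (Complex.I • f u))) :=
        seminorm_intervalIntegral_le p hp hfc hτt
    _ = ∫ u in τ..t, g * p (f u) := by
        exact intervalIntegral.integral_congr fun u _ => hpt u
    _ = g * ∫ u in τ..t, p (f u) := intervalIntegral.integral_const_mul g _
    _ ≤ g * ∫ u in τ..t, B u := by
        refine mul_le_mul_of_nonneg_left ?_ hg
        refine intervalIntegral.integral_mono_on hτt ?_ (hB.intervalIntegrable τ t) hbd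
        exact (hp.comp hf).intervalIntegrable τ t

/-- Iterative (Dyson) expansion of the time-evolution operator with remainder
estimate: let `H_I(t)` be linear operators with `N₀(H_I(t)x) ≤ ‖x‖_𝔽` (operator
norm ≤ 1 from 𝔽 into `𝐅_{𝔅₀}`) and `N_{n+1}(H_I(t)x) ≤ N_n(x)` (mapping
`𝔅ₙ`-bounded sets into `𝔅_{n+1}`-bounded sets uniformly in `t`),
and suppose `t ↦ S_g(t)Φ` solves `S_g'(t)Φ = −i g H_I(t) S_g(t)Φ`,
`S_g(τ) = 1`, with `‖S_g(t)Φ‖ = ‖Φ‖`.  With `S_[0] = 1` and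
`S_[n](t) = −i ∫_τ^t H_I(u) S_[n−1](u) du`, for every `n` and `t ≥ τ`:
`‖(S_g(t) − Σ_{k=0}^n g^k S_[k](t))Φ‖_{𝔅ₙ}
  ≤ g^{n+1} (t−τ)^{n+1}/(n+1)! · ‖Φ‖_𝔽`. -/
theorem stmt_19 (E : Type*) [NormedAddCommGroup E] [NormedSpace ℂ E] [CompleteSpace E]
    (N : ℕ → Seminorm ℂ E) (hNcont : ∀ n, Continuous fun x => N n x)
    (HI : ℝ → E →ₗ[ℂ] E)
    (hH0 : ∀ (t : ℝ) (x : E), N 0 (HI t x) ≤ ‖x‖)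
    (hHn : ∀ (n : ℕ) (t : ℝ) (x : E), N (n + 1) (HI t x) ≤ N n x)
    (g τ : ℝ) (hg : 0 ≤ g)
    (Φ : E) (S : ℝ → E)
    (hS : ∀ t, HasDerivAt S (-((g : ℂ) • (Complex.I • HI t (S t)))) t)
    (hSτ : S τ = Φ)
    (hSnorm : ∀ t, ‖S t‖ = ‖Φ‖)
    (hScont : Continuous fun u => HI u (S u))
    (Sn : ℕ → ℝ → E)
    (hSn0 : ∀ t, Sn 0 t = Φ)
    (hSnrec : ∀ (n : ℕ) (t : ℝ),
      Sn (n + 1) t = -(Complex.I • ∫ u in τ..t, HI u (Sn n u)))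
    (hSncont : ∀ n : ℕ, Continuous fun u => HI u (Sn n u)) :
    ∀ (n : ℕ) (t : ℝ), τ ≤ t →
      N n (S t - ∑ k ∈ Finset.range (n + 1), (g : ℂ) ^ k • Sn k t)
        ≤ g ^ (n + 1) * (t - τ) ^ (n + 1) / (Nat.factorial (n + 1) : ℝ) * ‖Φ‖ := by
  -- FTC identity for S
  have h1 : ∀ s : ℝ, S s - Φ = ∫ u in τ..s, -((g : ℂ) • (Complex.I • HI u (S u))) := by
    intro s
    rw [← hSτ]
    exact (intervalIntegral.integral_eq_sub_of_hasDerivAt (fun u _ => hS u)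
      ((((hScont.const_smul Complex.I).const_smul ((g : ℂ))).neg).intervalIntegrable τ s)).symm
  intro n
  induction n with
  | zero =>
    intro t ht
    have hsum : ∑ k ∈ Finset.range 1, (g : ℂ) ^ k • Sn k t = Φ := by simp [hSn0]
    rw [hsum, h1 t]
    have hbd : ∀ u ∈ Set.Icc τ t, N 0 (HI u (S u)) ≤ ‖Φ‖ := fun u _ => by
      calc N 0 (HI u (S u)) ≤ ‖S u‖ := hH0 u (S u)
        _ = ‖Φ‖ := hSnorm u
    have := aux_est (N 0) (hNcont 0) hg ht hScont continuous_const hbd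
    calc N 0 (∫ u in τ..t, -((g : ℂ) • (Complex.I • HI u (S u))))
        ≤ g * ∫ u in τ..t, (‖Φ‖ : ℝ) := this
      _ = g ^ 1 * (t - τ) ^ 1 / (Nat.factorial 1 : ℝ) * ‖Φ‖ := by
          rw [intervalIntegral.integral_const]
          simp [Nat.factorial]
          ring
  | succ n ih =>
    intro t ht
    -- the remainder at level n
    set R : ℝ → E := fun u => S u - ∑ k ∈ Finset.range (n + 1), (g : ℂ) ^ k • Sn k u with hR
    -- pointwise identity for HI applied to R
    have hHIR : ∀ u, HI u (R u)
        = HI u (S u) - ∑ k ∈ Finset.range (n + 1), (g : ℂ) ^ k • HI u (Sn k u) := by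
      intro u
      simp [hR, map_sub, map_sum, LinearMap.map_smul]
    have hHIRcont : Continuous fun u => HI u (R u) := by
      have : (fun u => HI u (R u)) = fun u =>
          HI u (S u) - ∑ k ∈ Finset.range (n + 1), (g : ℂ) ^ k • HI u (Sn k u) := by
        funext u; exact hHIR u
      rw [this]
      exact hScont.sub (continuous_finset_sum _ fun k _ => (hSncont k).const_smul _)
    -- identity for powers of g times Sn
    have h2 : ∀ (k : ℕ) (s : ℝ), (g : ℂ) ^ (k + 1) • Sn (k + 1) s
        = ∫ u in τ..s, -((g : ℂ) ^ (k + 1) • (Complex.I • HI u (Sn k u))) := by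
      intro k s
      rw [hSnrec k s, intervalIntegral.integral_neg, intervalIntegral.integral_smul,
        intervalIntegral.integral_smul, smul_neg, smul_comm]
    -- the main integral identity
    have hRid : S t - ∑ k ∈ Finset.range (n + 2), (g : ℂ) ^ k • Sn k t
        = ∫ u in τ..t, -((g : ℂ) • (Complex.I • HI u (R u))) := by
      have hsplit : ∑ k ∈ Finset.range (n + 2), (g : ℂ) ^ k • Sn k t
          = (∑ j ∈ Finset.range (n + 1), (g : ℂ) ^ (j + 1) • Sn (j + 1) t) + Φ := by
        rw [Finset.sum_range_succ']
        simp [hSn0]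
      have hint_j : ∀ j : ℕ, IntervalIntegrable
          (fun u => -((g : ℂ) ^ (j + 1) • (Complex.I • HI u (Sn j u)))) volume τ t :=
        fun j => ((((hSncont j).const_smul Complex.I).const_smul _).neg).intervalIntegrable τ t
      calc S t - ∑ k ∈ Finset.range (n + 2), (g : ℂ) ^ k • Sn k t
          = (S t - Φ) - ∑ j ∈ Finset.range (n + 1), (g : ℂ) ^ (j + 1) • Sn (j + 1) t := by
            rw [hsplit]; abel
        _ = (∫ u in τ..t, -((g : ℂ) • (Complex.I • HI u (S u))))
            - ∑ j ∈ Finset.range (n + 1),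
                ∫ u in τ..t, -((g : ℂ) ^ (j + 1) • (Complex.I • HI u (Sn j u))) := by
            rw [h1 t]
            congr 1
            exact Finset.sum_congr rfl fun j _ => h2 j t
        _ = (∫ u in τ..t, -((g : ℂ) • (Complex.I • HI u (S u))))
            - ∫ u in τ..t, ∑ j ∈ Finset.range (n + 1),
                -((g : ℂ) ^ (j + 1) • (Complex.I • HI u (Sn j u))) := by
            rw [intervalIntegral.integral_finset_sum fun j _ => hint_j j]
        _ = ∫ u in τ..t, (-((g : ℂ) • (Complex.I • HI u (S u)))
            - ∑ j ∈ Finset.range (n + 1),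
                -((g : ℂ) ^ (j + 1) • (Complex.I • HI u (Sn j u)))) := by
            exact (intervalIntegral.integral_sub
              ((((hScont.const_smul Complex.I).const_smul _).neg).intervalIntegrable τ t)
              ((continuous_finset_sum _ fun j _ =>
                (((hSncont j).const_smul Complex.I).const_smul _).neg).intervalIntegrable τ t)).symm
        _ = ∫ u in τ..t, -((g : ℂ) • (Complex.I • HI u (R u))) := by
            refine intervalIntegral.integral_congr fun u _ => ?_
            rw [hHIR u]
            have hsm : ∀ (k : ℕ) (Y : E),
                (g : ℂ) • (Complex.I • ((g : ℂ) ^ k • Y))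
                  = (g : ℂ) ^ (k + 1) • (Complex.I • Y) := by
              intro k Y
              rw [smul_comm Complex.I ((g : ℂ) ^ k) Y, smul_smul, ← pow_succ']
            simp only [smul_sub, Finset.smul_sum, hsm, neg_sub, Finset.sum_neg_distrib]
            abel
    rw [hRid]
    set B : ℝ → ℝ := fun u => g ^ (n + 1) * (u - τ) ^ (n + 1) / (Nat.factorial (n + 1) : ℝ) * ‖Φ‖
      with hB
    have hBcont : Continuous B := by
      rw [hB]; fun_prop
    have hbd : ∀ u ∈ Set.Icc τ t, N (n + 1) (HI u (R u)) ≤ B u := fun u hu =>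
      (hHn n u (R u)).trans (ih u hu.1)
    have key := aux_est (N (n + 1)) (hNcont (n + 1)) hg ht hHIRcont hBcont hbd
    refine key.trans (le_of_eq ?_)
    have hintpow : (∫ u in τ..t, (u - τ) ^ (n + 1)) = (t - τ) ^ (n + 2) / (n + 2) := by
      rw [intervalIntegral.integral_comp_sub_right (fun x => x ^ (n + 1)) τ, integral_pow]
      simp
      ring
    have hBform : B = fun u =>
        (g ^ (n + 1) / (Nat.factorial (n + 1) : ℝ) * ‖Φ‖) * (u - τ) ^ (n + 1) := by
      funext u; rw [hB]; ring
    rw [hBform, intervalIntegral.integral_const_mul, hintpow]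
    have hfact : (Nat.factorial (n + 1 + 1) : ℝ) = (n + 2) * (Nat.factorial (n + 1) : ℝ) := by
      rw [Nat.factorial_succ]; push_cast; ring
    have hf1 : (Nat.factorial (n + 1) : ℝ) ≠ 0 := Nat.cast_ne_zero.2 (Nat.factorial_ne_zero _)
    have hf2 : ((n : ℝ) + 2) ≠ 0 := by positivity
    rw [hfact]
    field_simp
    ring
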